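/- Let P̃ = (X+Y)(Y+Z)(Z+X) ∈ ℤ[X,Y,Z]. For every n ≥ 1, the coefficient c_n of the monomial X^n Y^n Z^n in P̃^n equals the Franel number Σ_{k=0}^{n} C(n,k)^3. -/

import Mathlib

open MvPolynomial

/-- The exponent vector of the monomial `X^n Y^n Z^n` in three variables. -/
noncomputable def diagExp (n : ℕ) : Fin 3 →₀ ℕ :=
  Finsupp.single 0 n + Finsupp.single 1 n + Finsupp.single 2 n

lemma pow_eq_sum (i j : Fin 3) (n : ℕ) :
    ((X i + X j : MvPolynomial (Fin 3) ℤ)) ^ n =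
    ∑ a ∈ Finset.range (n+1),
      monomial (Finsupp.single i a + Finsupp.single j (n - a)) ((n.choose a : ℤ)) := by
  rw [add_pow]
  apply Finset.sum_congr rfl
  intro a _
  rw [X_pow_eq_monomial, X_pow_eq_monomial, monomial_mul]
  rw [show ((n.choose a : MvPolynomial (Fin 3) ℤ)) = C ((n.choose a : ℤ)) from
    (map_natCast C (n.choose a)).symm]
  rw [mul_comm, C_mul_monomial]
  simp

lemma key (n a b c : ℕ) :
    (Finsupp.single (0 : Fin 3) a + Finsupp.single (1 : Fin 3) (n - a) +
      (Finsupp.single (1 : Fin 3) b + Finsupp.single (2 : Fin 3) (n - b)) +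
      (Finsupp.single (2 : Fin 3) c + Finsupp.single (0 : Fin 3) (n - c)) = diagExp n)
    ↔ (a = b ∧ (c = b ∧ b ≤ n)) := by
  constructor
  · intro h
    have h0 := DFunLike.congr_fun h 0
    have h1 := DFunLike.congr_fun h 1
    have h2 := DFunLike.congr_fun h 2
    simp [diagExp, Finsupp.single_apply] at h0 h1 h2
    omega
  · rintro ⟨rfl, rfl, hb⟩
    ext x
    simp [diagExp, Finsupp.single_apply]
    fin_cases x <;> simp <;> omega

/-- For `P̃ = (X+Y)(Y+Z)(Z+X)`, the coefficient `c_n` of `XⁿYⁿZⁿ` in `P̃ⁿ`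
equals the Franel number `Σ_{k=0}^n C(n,k)³`. -/
theorem stmt8 (n : ℕ) (hn : 1 ≤ n) :
    MvPolynomial.coeff (diagExp n)
      (((X 0 + X 1) * (X 1 + X 2) * (X 2 + X 0) : MvPolynomial (Fin 3) ℤ) ^ n)
      = ∑ k ∈ Finset.range (n + 1), (Nat.choose n k ^ 3 : ℕ) := by
  rw [mul_pow, mul_pow, pow_eq_sum 0 1, pow_eq_sum 1 2, pow_eq_sum 2 0]
  simp only [Finset.sum_mul, Finset.mul_sum, monomial_mul, coeff_sum, coeff_monomial]
  simp only [key, ite_and]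
  simp only [Finset.sum_ite_eq' (Finset.range (n+1)), Finset.mem_range]
  push_cast
  rw [Finset.sum_comm]
  apply Finset.sum_congr rfl
  intro b hb
  rw [Finset.mem_range] at hb
  simp only [if_pos hb]
  rw [Finset.sum_ite_eq' (Finset.range (n+1)) b]
  simp [Finset.mem_range.mpr hb, Nat.lt_succ_iff.mp hb]
  ring
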